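/- Let T be an n×m×l binary tensor with Boolean rank r = rank_B(T). Then T admits a rank-r Boolean CP decomposition into binary factor matrices A (n×r), B (m×r), C (l×r) such that |A| + |B| + |C| ≤ 3|T|, where |·| denotes the number of nonzero entries. -/

import Mathlib

/-- `A`, `B`, `C` form a rank-`r` Boolean CP decomposition of the binary tensor `T`:
`T = ⋁_{s=1}^r a_{:s} ⊠ b_{:s} ⊠ c_{:s}`. -/
def IsBoolCP {n m l r : ℕ} (T : Fin n → Fin m → Fin l → Bool)
    (A : Fin n → Fin r → Bool) (B : Fin m → Fin r → Bool) (C : Fin l → Fin r → Bool) :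
    Prop :=
  ∀ i j k, T i j k = decide (∃ s : Fin r, (A i s && B j s && C k s) = true)

/-- The Boolean rank of a binary tensor: the least `r` admitting a rank-`r` Boolean CP
decomposition. -/
noncomputable def boolRank {n m l : ℕ} (T : Fin n → Fin m → Fin l → Bool) : ℕ :=
  sInf {r : ℕ | ∃ (A : Fin n → Fin r → Bool) (B : Fin m → Fin r → Bool)
    (C : Fin l → Fin r → Bool), IsBoolCP T A B C}

/-- number of nonzero entries of a binary matrix -/
def nnz {a b : ℕ} (f : Fin a → Fin b → Bool) : ℕ :=
  (Finset.univ.filter fun x : Fin a × Fin b => f x.1 x.2 = true).card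

/-- number of nonzero entries of a binary tensor -/
def tnnz {n m l : ℕ} (T : Fin n → Fin m → Fin l → Bool) : ℕ :=
  (Finset.univ.filter fun x : Fin n × Fin m × Fin l => T x.1 x.2.1 x.2.2 = true).card

lemma boolCP_exists {n m l : ℕ} (T : Fin n → Fin m → Fin l → Bool) :
    ∃ r : ℕ, ∃ A : Fin n → Fin r → Bool, ∃ B : Fin m → Fin r → Bool,
      ∃ C : Fin l → Fin r → Bool, IsBoolCP T A B C := by
  classical
  refine ⟨n * (m * l), ?_⟩
  let e : (Fin n × Fin m × Fin l) ≃ Fin (n * (m * l)) :=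
    (Equiv.prodCongr (Equiv.refl (Fin n)) finProdFinEquiv).trans finProdFinEquiv
  set d : Fin (n * (m * l)) → Fin n × Fin m × Fin l := fun s => e.symm s with hd
  have hsurj : Function.Surjective d := fun x => ⟨e x, by rw [hd]; exact e.symm_apply_apply x⟩
  refine ⟨fun i s => decide ((d s).1 = i) && T (d s).1 (d s).2.1 (d s).2.2,
    fun j s => decide ((d s).2.1 = j), fun k s => decide ((d s).2.2 = k), ?_⟩
  intro i j k
  have key : (∃ s : Fin (n * (m * l)),
      ((decide ((d s).1 = i) && T (d s).1 (d s).2.1 (d s).2.2) && decide ((d s).2.1 = j)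
        && decide ((d s).2.2 = k)) = true) ↔ T i j k = true := by
    constructor
    · rintro ⟨s, hs⟩
      simp only [Bool.and_eq_true, decide_eq_true_eq] at hs
      obtain ⟨⟨⟨h1, h2⟩, h3⟩, h4⟩ := hs
      rw [← h1, ← h3, ← h4]; exact h2
    · intro h
      obtain ⟨s, hs⟩ := hsurj (i, j, k)
      refine ⟨s, ?_⟩
      simp only [Bool.and_eq_true, decide_eq_true_eq]
      rw [hs]
      exact ⟨⟨⟨rfl, h⟩, rfl⟩, rfl⟩
  calc T i j k = decide (T i j k = true) := by cases h : T i j k <;> simp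
    _ = _ := decide_eq_decide.mpr key.symm

/-- rotate a Boolean CP decomposition -/
lemma IsBoolCP.rot {n m l r : ℕ} {T : Fin n → Fin m → Fin l → Bool}
    {A : Fin n → Fin r → Bool} {B : Fin m → Fin r → Bool} {C : Fin l → Fin r → Bool}
    (h : IsBoolCP T A B C) : IsBoolCP (fun j k i => T i j k) B C A := by
  intro j k i
  show T i j k = _
  rw [h i j k]
  apply decide_eq_decide.mpr
  constructor <;> rintro ⟨s, hs⟩ <;> refine ⟨s, ?_⟩ <;>
    simp only [Bool.and_eq_true] at hs ⊢ <;> tauto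

lemma tnnz_rot {n m l : ℕ} (T : Fin n → Fin m → Fin l → Bool) :
    tnnz (fun j k i => T i j k) = tnnz T := by
  classical
  apply Finset.card_nbij' (fun x : Fin m × Fin l × Fin n => (x.2.2, x.1, x.2.1))
    (fun y : Fin n × Fin m × Fin l => (y.2.1, y.2.2, y.1))
  · intro a ha
    simp only [Finset.mem_coe, Finset.mem_filter, Finset.mem_univ, true_and] at ha ⊢
    exact ha
  · intro b hb
    simp only [Finset.mem_coe, Finset.mem_filter, Finset.mem_univ, true_and] at hb ⊢
    exact hb
  · intro a _; rfl
  · intro b _; rfl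

/-- Key pruning lemma: if `A` has minimal weight among all `A'` with
`IsBoolCP T A' B C`, then `nnz A ≤ tnnz T`. -/
lemma nnz_le_tnnz {n m l r : ℕ} (T : Fin n → Fin m → Fin l → Bool)
    (A : Fin n → Fin r → Bool) (B : Fin m → Fin r → Bool) (C : Fin l → Fin r → Bool)
    (hT : IsBoolCP T A B C)
    (hmin : ∀ A' : Fin n → Fin r → Bool, IsBoolCP T A' B C → nnz A ≤ nnz A') :
    nnz A ≤ tnnz T := by
  classical
  have claim : ∀ i s, A i s = true → ∃ jk : Fin m × Fin l,
      T i jk.1 jk.2 = true ∧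
        ∀ s', (A i s' && B jk.1 s' && C jk.2 s') = true → s' = s := by
    intro i s hAis
    by_contra hcon
    push_neg at hcon
    -- hcon : ∀ jk, T i jk.1 jk.2 = true → ∃ s', cover ∧ s' ≠ s
    set A' : Fin n → Fin r → Bool :=
      fun i' s' => A i' s' && !(decide (i' = i) && decide (s' = s)) with hA'
    have hle : ∀ i' s', A' i' s' = true → A i' s' = true := by
      intro i' s' h
      simp only [hA', Bool.and_eq_true] at h
      exact h.1
    have hAeq : ∀ i' s', ¬(i' = i ∧ s' = s) → A' i' s' = A i' s' := by
      intro i' s' hc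
      by_cases h1 : i' = i
      · have h2 : s' ≠ s := fun h => hc ⟨h1, h⟩
        simp [hA', h1, h2]
      · simp [hA', h1]
    have hCP' : IsBoolCP T A' B C := by
      intro i' j k
      rw [hT i' j k]
      apply decide_eq_decide.mpr
      constructor
      · rintro ⟨s', hs'⟩
        by_cases hc : i' = i
        · subst hc
          have hTt : T i' j k = true := by
            rw [hT i' j k]; exact decide_eq_true ⟨s', hs'⟩
          obtain ⟨s'', hs'', hne⟩ := hcon (j, k) hTt
          refine ⟨s'', ?_⟩
          simp only [Bool.and_eq_true] at hs'' ⊢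
          refine ⟨⟨?_, hs''.1.2⟩, hs''.2⟩
          rw [hAeq i' s'' (fun h => hne h.2)]
          exact hs''.1.1
        · refine ⟨s', ?_⟩
          simp only [Bool.and_eq_true] at hs' ⊢
          refine ⟨⟨?_, hs'.1.2⟩, hs'.2⟩
          rw [hAeq i' s' (fun h => hc h.1)]
          exact hs'.1.1
      · rintro ⟨s', hs'⟩
        refine ⟨s', ?_⟩
        simp only [Bool.and_eq_true] at hs' ⊢
        exact ⟨⟨hle _ _ hs'.1.1, hs'.1.2⟩, hs'.2⟩
    have hlt : nnz A' < nnz A := by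
      apply Finset.card_lt_card
      constructor
      · intro x hx
        simp only [Finset.mem_filter, Finset.mem_univ, true_and] at hx ⊢
        exact hle _ _ hx
      · intro hsub
        have h1 : (i, s) ∈ Finset.univ.filter fun x : Fin n × Fin r => A x.1 x.2 = true := by
          simp [hAis]
        have h2 := hsub h1
        simp only [Finset.mem_filter, Finset.mem_univ, true_and] at h2
        simp [hA'] at h2
    exact absurd (hmin A' hCP') (not_le.mpr hlt)
  -- choose witnesses
  choose g hg1 hg2 using claim
  have cov : ∀ i s (h : A i s = true),
      (A i s && B (g i s h).1 s && C (g i s h).2 s) = true := by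
    intro i s h
    have hTt := hg1 i s h
    rw [hT] at hTt
    simp only [decide_eq_true_eq] at hTt
    obtain ⟨s', hs'⟩ := hTt
    have heq := hg2 i s h s' hs'
    rwa [heq] at hs'
  rcases (Finset.univ.filter fun x : Fin n × Fin r => A x.1 x.2 = true).eq_empty_or_nonempty
    with he | hne
  · simp [nnz, he]
  · obtain ⟨x0, hx0⟩ := hne
    have hx0' : A x0.1 x0.2 = true := by
      simpa using hx0
    have : Nonempty (Fin m × Fin l) := ⟨g x0.1 x0.2 hx0'⟩
    set f : Fin n × Fin r → Fin n × Fin m × Fin l := fun x =>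
      if h : A x.1 x.2 = true then (x.1, g x.1 x.2 h) else (x.1, Classical.arbitrary _)
      with hf
    apply Finset.card_le_card_of_injOn f
    · intro x hx
      have hax : A x.1 x.2 = true := by simpa using hx
      simp only [hf, dif_pos hax, Finset.mem_coe, Finset.mem_filter, Finset.mem_univ, true_and]
      exact hg1 x.1 x.2 hax
    · rintro ⟨x1, x2⟩ hx ⟨y1, y2⟩ hy hxy
      have hax : A x1 x2 = true := by simpa using hx
      have hay : A y1 y2 = true := by simpa using hy
      simp only [hf, dif_pos hax, dif_pos hay, Prod.mk.injEq] at hxy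
      obtain ⟨h1, h2⟩ := hxy
      subst h1
      have covy := cov x1 y2 hay
      rw [← h2] at covy
      have := hg2 x1 x2 hax y2 covy
      rw [this]

/-- A binary tensor `T` with Boolean rank `r` admits a rank-`r`
Boolean CP decomposition whose factors satisfy `|A| + |B| + |C| ≤ 3|T|`. -/
theorem exists_boolCP_nnz_le (n m l : ℕ) (T : Fin n → Fin m → Fin l → Bool)
    (r : ℕ) (hr : boolRank T = r) :
    ∃ (A : Fin n → Fin r → Bool) (B : Fin m → Fin r → Bool) (C : Fin l → Fin r → Bool),
      IsBoolCP T A B C ∧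
      (Finset.univ.filter fun x : Fin n × Fin r => A x.1 x.2 = true).card
        + (Finset.univ.filter fun x : Fin m × Fin r => B x.1 x.2 = true).card
        + (Finset.univ.filter fun x : Fin l × Fin r => C x.1 x.2 = true).card
      ≤ 3 * (Finset.univ.filter fun x : Fin n × Fin m × Fin l =>
          T x.1 x.2.1 x.2.2 = true).card := by
  classical
  obtain ⟨r0, A0, B0, C0, h0⟩ := boolCP_exists T
  have hSne : {r : ℕ | ∃ (A : Fin n → Fin r → Bool) (B : Fin m → Fin r → Bool)
      (C : Fin l → Fin r → Bool), IsBoolCP T A B C}.Nonempty := ⟨r0, A0, B0, C0, h0⟩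
  have hrmem : ∃ (A : Fin n → Fin r → Bool) (B : Fin m → Fin r → Bool)
      (C : Fin l → Fin r → Bool), IsBoolCP T A B C := by
    have := Nat.sInf_mem hSne
    rwa [show sInf _ = r from hr] at this
  obtain ⟨A1, B1, C1, h1⟩ := hrmem
  -- weight-minimal decomposition at rank r
  set W : Set ℕ := {w | ∃ (A : Fin n → Fin r → Bool) (B : Fin m → Fin r → Bool)
      (C : Fin l → Fin r → Bool), IsBoolCP T A B C ∧ nnz A + nnz B + nnz C = w} with hW
  have hWne : W.Nonempty := ⟨_, A1, B1, C1, h1, rfl⟩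
  obtain ⟨A, B, C, hCP, hw⟩ := Nat.sInf_mem hWne
  have hmin : ∀ (A' : Fin n → Fin r → Bool) (B' : Fin m → Fin r → Bool)
      (C' : Fin l → Fin r → Bool), IsBoolCP T A' B' C' →
      nnz A + nnz B + nnz C ≤ nnz A' + nnz B' + nnz C' := by
    intro A' B' C' h'
    rw [hw]
    exact Nat.sInf_le ⟨A', B', C', h', rfl⟩
  have hA : nnz A ≤ tnnz T := by
    apply nnz_le_tnnz T A B C hCP
    intro A' h'
    have := hmin A' B C h'
    omega
  have hB : nnz B ≤ tnnz T := by
    have h1 : IsBoolCP (fun j k i => T i j k) B C A := hCP.rot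
    have h2 := nnz_le_tnnz _ B C A h1 ?_
    · rwa [tnnz_rot] at h2
    · intro B' h'
      have h'' : IsBoolCP T A B' C := h'.rot.rot
      have := hmin A B' C h''
      omega
  have hC : nnz C ≤ tnnz T := by
    have h2 : IsBoolCP (fun k i j => T i j k) C A B := hCP.rot.rot
    have h3 := nnz_le_tnnz _ C A B h2 ?_
    · rw [show (fun k i j => T i j k) = (fun k i j => (fun j k i => T i j k) j k i) from rfl,
        tnnz_rot, tnnz_rot] at h3
      exact h3
    · intro C' h'
      have h'' : IsBoolCP T A B C' := h'.rot
      have := hmin A B C' h''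
      omega
  refine ⟨A, B, C, hCP, ?_⟩
  show nnz A + nnz B + nnz C ≤ 3 * tnnz T
  omega
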